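/- Let a, b, c, d be real numbers, and suppose the characteristic polynomial λ⁴ - aλ³ - bλ² - cλ - d has a double real root α=β and two distinct simple complex conjugate roots γ, γ̄ (all distinct from α). Let (J_n) satisfy J_{n+4} = a·J_{n+3} + b·J_{n+2} + c·J_{n+1} + d·J_n with J_0 = J_1 = 0, J_2 = 1, J_3 = a. Then for all n ≥ 0, J_n = ((γ̄γ - α²)/((γ̄-α)²(γ-α)²) + n/((γ̄-α)(γ-α)))·αⁿ - γ·γⁿ/((γ̄-γ)(γ-α)²) + γ̄·γ̄ⁿ/((γ̄-γ)(γ̄-α)²). -/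

import Mathlib

set_option maxHeartbeats 1600000 in
theorem stmt_13 (a b c d : ℝ) (α : ℝ) (γ : ℂ) (hγ : γ.im ≠ 0)
    (hfac : ∀ z : ℂ, z ^ 4 - (a : ℂ) * z ^ 3 - (b : ℂ) * z ^ 2 - (c : ℂ) * z - (d : ℂ) =
      (z - (α : ℂ)) ^ 2 * (z - γ) * (z - (starRingEnd ℂ) γ))
    (J : ℕ → ℝ)
    (hJ0 : J 0 = 0) (hJ1 : J 1 = 0) (hJ2 : J 2 = 1) (hJ3 : J 3 = a)
    (hJ : ∀ n : ℕ, J (n + 4) = a * J (n + 3) + b * J (n + 2) + c * J (n + 1) + d * J n) :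
    ∀ n : ℕ, (J n : ℂ) =
      (((starRingEnd ℂ) γ * γ - (α : ℂ) ^ 2) / (((starRingEnd ℂ) γ - α) ^ 2 * (γ - α) ^ 2)
        + (n : ℂ) / (((starRingEnd ℂ) γ - α) * (γ - α))) * (α : ℂ) ^ n
      - γ * γ ^ n / (((starRingEnd ℂ) γ - γ) * (γ - α) ^ 2)
      + (starRingEnd ℂ) γ * ((starRingEnd ℂ) γ) ^ n
        / (((starRingEnd ℂ) γ - γ) * ((starRingEnd ℂ) γ - α) ^ 2) := by
  set C : ℂ := (starRingEnd ℂ) γ with hC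
  have h1 : (γ - (α:ℂ)) ≠ 0 := by
    intro h
    apply hγ
    have := congrArg Complex.im h
    simpa using this
  have h2 : (C - (α:ℂ)) ≠ 0 := by
    intro h
    apply hγ
    have := congrArg Complex.im h
    simp [hC] at this
    linarith
  have h3 : (C - γ) ≠ 0 := by
    intro h
    apply hγ
    have := congrArg Complex.im h
    simp [hC] at this
    linarith
  have e0 := hfac 0
  have e1 := hfac 1
  have em1 := hfac (-1)
  have e2 := hfac 2
  have ha : (a:ℂ) = 2*α + γ + C := by
    linear_combination (-1/2)*e0 + (1/2)*e1 + (1/6)*em1 - (1/6)*e2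
  have hb : (b:ℂ) = -(γ*C + 2*α*(γ+C) + α^2) := by
    linear_combination e0 - (1/2)*e1 - (1/2)*em1
  have hc : (c:ℂ) = 2*α*(γ*C) + α^2*(γ+C) := by
    linear_combination (1/2)*e0 - e1 + (1/3)*em1 + (1/6)*e2
  have hd : (d:ℂ) = -(α^2*(γ*C)) := by
    linear_combination -e0
  set D : ℂ := (C - γ) * (C - (α:ℂ))^2 * (γ - (α:ℂ))^2 with hD
  have hDne : D ≠ 0 := by
    apply mul_ne_zero (mul_ne_zero h3 (pow_ne_zero 2 h2)) (pow_ne_zero 2 h1)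
  set G : ℕ → ℂ := fun n =>
    ((C*γ - (α:ℂ)^2 + (n:ℂ)*(C - α)*(γ - α)) * (C - γ) * (α:ℂ)^n
      - γ * γ^n * (C - α)^2 + C * C^n * (γ - α)^2) with hG
  have key : ∀ n : ℕ, (J n : ℂ) * D = G n := by
    intro n
    induction n using Nat.strong_induction_on with
    | _ n ih =>
      match n with
      | 0 => rw [hJ0]; simp only [hG, hD]; push_cast; ring
      | 1 => rw [hJ1]; simp only [hG, hD]; push_cast; ring
      | 2 => rw [hJ2]; simp only [hG, hD]; push_cast; ring
      | 3 =>
        rw [hJ3]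
        simp only [hG, hD]
        push_cast
        rw [ha]
        ring
      | (m+4) =>
        have i0 := ih m (by omega)
        have i1 := ih (m+1) (by omega)
        have i2 := ih (m+2) (by omega)
        have i3 := ih (m+3) (by omega)
        rw [hJ m]
        push_cast
        have expand : ((a:ℂ) * J (m+3) + b * J (m+2) + c * J (m+1) + d * J m) * D
            = (a:ℂ) * G (m+3) + b * G (m+2) + c * G (m+1) + d * G m := by
          rw [← i0, ← i1, ← i2, ← i3]; ring
        rw [expand, ha, hb, hc, hd]
        simp only [hG]
        push_cast
        ring
  intro n
  have hJn : (J n : ℂ) = G n / D := by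
    rw [eq_div_iff hDne, key n]
  have hQ1 : (C-(α:ℂ))^2*(γ-(α:ℂ))^2 ≠ 0 :=
    mul_ne_zero (pow_ne_zero 2 h2) (pow_ne_zero 2 h1)
  have hQ2 : (C-(α:ℂ))*(γ-(α:ℂ)) ≠ 0 := mul_ne_zero h2 h1
  have t1 : ((C*γ - (α:ℂ)^2)/((C-(α:ℂ))^2*(γ-(α:ℂ))^2) + (n:ℂ)/((C-(α:ℂ))*(γ-(α:ℂ)))) * (α:ℂ)^n
      = ((C*γ - (α:ℂ)^2 + (n:ℂ)*(C-(α:ℂ))*(γ-(α:ℂ))) * (C-γ) * (α:ℂ)^n)/D := by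
    rw [div_add_div _ _ hQ1 hQ2, div_mul_eq_mul_div, div_eq_div_iff (mul_ne_zero hQ1 hQ2) hDne, hD]
    ring
  have t2 : γ*γ^n/((C-γ)*(γ-(α:ℂ))^2) = γ*γ^n*(C-(α:ℂ))^2/D := by
    rw [div_eq_div_iff (mul_ne_zero h3 (pow_ne_zero 2 h1)) hDne, hD]; ring
  have t3 : C*C^n/((C-γ)*(C-(α:ℂ))^2) = C*C^n*(γ-(α:ℂ))^2/D := by
    rw [div_eq_div_iff (mul_ne_zero h3 (pow_ne_zero 2 h2)) hDne, hD]; ring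
  rw [hJn, t1, t2, t3, div_sub_div_same, ← add_div]
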